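/- Let Φ : P_d → P_k be a strictly positive linear map. Then for all Hermitian positive definite A, B and all t ∈ [0,1], Φ(A #_t B) ⪯ Φ(A) #_t Φ(B). -/

import Mathlib

set_option linter.unusedSectionVars false

namespace CGO

open Matrix
open scoped ComplexOrder

variable {n : Type*} [Fintype n] [DecidableEq n]

/-- The Löwner partial order `A ⪯ B` on matrices: `B - A` is positive semidefinite. -/
def LoewnerLE (A B : Matrix n n ℂ) : Prop := (B - A).PosSemidef

lemma cfc_isHermitian {A : Matrix n n ℂ} (hA : A.IsHermitian) (f : ℝ → ℝ) :
    (hA.cfc f).IsHermitian := by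
  rw [Matrix.IsHermitian.cfc, Unitary.conjStarAlgAut_apply, Matrix.star_eq_conjTranspose]
  exact Matrix.isHermitian_mul_mul_conjTranspose _
    (Matrix.isHermitian_diagonal_of_self_adjoint _ (by
      show star _ = _
      funext i; simp [Function.comp]))

/-- Real powers of a Hermitian matrix, defined through the spectral theorem
(for positive definite `A`, this is the usual power `A^t`). -/
noncomputable def mpow {A : Matrix n n ℂ} (hA : A.IsHermitian) (t : ℝ) : Matrix n n ℂ :=
  hA.cfc (fun x => x ^ t)

lemma mpow_isHermitian {A : Matrix n n ℂ} (hA : A.IsHermitian) (t : ℝ) :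
    (mpow hA t).IsHermitian := cfc_isHermitian hA _

lemma mul_mul_isHermitian {A B : Matrix n n ℂ} (hA : A.IsHermitian) (hB : B.IsHermitian) :
    (A * B * A).IsHermitian := by
  have h := Matrix.isHermitian_mul_mul_conjTranspose A hB
  rwa [hA.eq] at h

/-- The weighted matrix geometric mean `A #ₜ B := A^{1/2} (A^{-1/2} B A^{-1/2})^t A^{1/2}`.
The midpoint `t = 1/2` is the matrix geometric mean `A # B`. -/
noncomputable def wgmean {A B : Matrix n n ℂ} (hA : A.PosDef) (hB : B.PosDef) (t : ℝ) :
    Matrix n n ℂ :=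
  mpow hA.1 (1/2) *
    mpow (mul_mul_isHermitian (mpow_isHermitian hA.1 (-(1/2))) hB.1) t *
    mpow hA.1 (1/2)

lemma wgmean_isHermitian {A B : Matrix n n ℂ} (hA : A.PosDef) (hB : B.PosDef) (t : ℝ) :
    (wgmean hA hB t).IsHermitian := by
  have h := mul_mul_isHermitian (mpow_isHermitian hA.1 (1/2))
    (mpow_isHermitian (mul_mul_isHermitian (mpow_isHermitian hA.1 (-(1/2))) hB.1) t)
  simpa [wgmean, mul_assoc] using h

section Basic


lemma mulVec_sumM {ι : Type*} (s : Finset ι) (M : ι → Matrix n n ℂ) (v : n → ℂ) :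
    (∑ i ∈ s, M i) *ᵥ v = ∑ i ∈ s, M i *ᵥ v := by
  ext j
  simp [Matrix.mulVec, dotProduct, Matrix.sum_apply, Finset.sum_mul]
  rw [Finset.sum_comm]

lemma dotProduct_sumV {ι : Type*} (s : Finset ι) (u : n → ℂ) (w : ι → n → ℂ) :
    u ⬝ᵥ (∑ i ∈ s, w i) = ∑ i ∈ s, u ⬝ᵥ w i := by
  simp [dotProduct, Finset.sum_apply, Finset.mul_sum]
  rw [Finset.sum_comm]

/-- quadratic form of a conjugated diagonal matrix -/
lemma qf_conj_diag (V : Matrix n n ℂ) (d : n → ℂ) (u : n → ℂ) :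
    star u ⬝ᵥ (V * diagonal d * star V) *ᵥ u
      = ∑ i, d i * ((Complex.normSq ((star V *ᵥ u) i) : ℝ) : ℂ) := by
  set y := star V *ᵥ u with hy
  have h1 : (V * diagonal d * star V) *ᵥ u = V *ᵥ (diagonal d *ᵥ y) := by
    rw [hy, ← mulVec_mulVec, ← mulVec_mulVec]
  have h2 : star u ⬝ᵥ V *ᵥ (diagonal d *ᵥ y) = star y ⬝ᵥ (diagonal d *ᵥ y) := by
    rw [dotProduct_mulVec]
    congr 1
    rw [hy, star_mulVec, star_eq_conjTranspose, conjTranspose_conjTranspose]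
  rw [h1, h2]
  unfold dotProduct
  apply Finset.sum_congr rfl
  intro i _
  rw [mulVec_diagonal]
  rw [Pi.star_apply, ← mul_assoc, mul_comm (star (y i)) (d i), mul_assoc]
  congr 1
  rw [Complex.normSq_eq_conj_mul_self]
  rfl

/-- Cauchy-Schwarz / AM-GM for a PSD sesquilinear form. -/
lemma psd_cs {R : Matrix n n ℂ} (hR : R.PosSemidef) (u v : n → ℂ) {a : ℝ} (ha : 0 < a) :
    2 * (star u ⬝ᵥ R *ᵥ v).re
      ≤ a⁻¹ * (star u ⬝ᵥ R *ᵥ u).re + a * (star v ⬝ᵥ R *ᵥ v).re := by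
  set z := star u ⬝ᵥ R *ᵥ v with hz
  have hsym : star v ⬝ᵥ R *ᵥ u = starRingEnd ℂ z := by
    rw [hz, ← RCLike.star_def, star_dotProduct]
    congr 1
    rw [star_mulVec, hR.1.eq, ← dotProduct_mulVec]
  have h0 := hR.dotProduct_mulVec_nonneg (u - (a : ℂ) • v)
  have hexp : star (u - (a:ℂ) • v) ⬝ᵥ R *ᵥ (u - (a:ℂ) • v)
      = star u ⬝ᵥ R *ᵥ u - (a:ℂ) * z - (a:ℂ) * starRingEnd ℂ z
        + ((a*a : ℝ) : ℂ) * (star v ⬝ᵥ R *ᵥ v) := by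
    rw [star_sub, star_smul, mulVec_sub, mulVec_smul]
    rw [sub_dotProduct, dotProduct_sub, dotProduct_sub]
    rw [smul_dotProduct, dotProduct_smul, dotProduct_smul]
    rw [← hsym]
    simp only [smul_eq_mul, RCLike.star_def, Complex.conj_ofReal, hz]
    push_cast
    simp only [smul_dotProduct, dotProduct_smul, smul_smul, smul_eq_mul]
    ring
  rw [hexp] at h0
  have h0re : 0 ≤ (star u ⬝ᵥ R *ᵥ u).re - 2 * a * z.re + a * a * (star v ⬝ᵥ R *ᵥ v).re := by
    have hre := (Complex.le_def.mp h0).1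
    simp only [Complex.zero_re, Complex.add_re, Complex.sub_re, Complex.re_ofReal_mul,
      Complex.conj_re] at hre
    linarith
  have key := mul_le_mul_of_nonneg_left h0re (le_of_lt (inv_pos.mpr ha))
  rw [mul_zero] at key
  have expand : a⁻¹ * ((star u ⬝ᵥ R *ᵥ u).re - 2 * a * z.re + a * a * (star v ⬝ᵥ R *ᵥ v).re)
      = a⁻¹ * (star u ⬝ᵥ R *ᵥ u).re - 2 * z.re + a * (star v ⬝ᵥ R *ᵥ v).re := by
    field_simp
  rw [expand] at key
  linarith

end Basic



section CFCLemmas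

variable {A : Matrix n n ℂ}

lemma diagonal_congr {d e : n → ℂ} (h : ∀ i, d i = e i) : diagonal d = diagonal e :=
  congrArg diagonal (funext h)

lemma star_mul_unit (hA : A.IsHermitian) :
    star (hA.eigenvectorUnitary : Matrix n n ℂ) * (hA.eigenvectorUnitary : Matrix n n ℂ) = 1 :=
  Matrix.mem_unitaryGroup_iff'.mp (hA.eigenvectorUnitary).2

lemma unit_mul_star (hA : A.IsHermitian) :
    (hA.eigenvectorUnitary : Matrix n n ℂ) * star (hA.eigenvectorUnitary : Matrix n n ℂ) = 1 :=
  Matrix.mem_unitaryGroup_iff.mp (hA.eigenvectorUnitary).2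

lemma cfc_mul (hA : A.IsHermitian) (f g : ℝ → ℝ) :
    hA.cfc f * hA.cfc g = hA.cfc (fun x => f x * g x) := by
  unfold Matrix.IsHermitian.cfc
  have hassoc : ∀ {a b c d e f : Matrix n n ℂ},
      (a * b * c) * (d * e * f) = a * (b * (c * d) * e) * f := by
    intros; simp only [mul_assoc]
  simp only [Unitary.conjStarAlgAut_apply]
  rw [hassoc, star_mul_unit hA, mul_one, diagonal_mul_diagonal,
    diagonal_congr (e := RCLike.ofReal ∘ (fun x => f x * g x) ∘ hA.eigenvalues)
      (fun i => by simp [Function.comp])]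

lemma cfc_one (hA : A.IsHermitian) : hA.cfc (fun _ => 1) = 1 := by
  unfold Matrix.IsHermitian.cfc
  simp only [Unitary.conjStarAlgAut_apply]
  have h1 : diagonal (RCLike.ofReal ∘ (fun _ => (1:ℝ)) ∘ hA.eigenvalues)
      = (1 : Matrix n n ℂ) := by
    rw [← diagonal_one]
    exact diagonal_congr (fun i => by simp [Function.comp])
  rw [h1, mul_one, unit_mul_star hA]

lemma cfc_congr (hA : A.IsHermitian) {f g : ℝ → ℝ}
    (h : ∀ i, f (hA.eigenvalues i) = g (hA.eigenvalues i)) : hA.cfc f = hA.cfc g := by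
  unfold Matrix.IsHermitian.cfc
  rw [diagonal_congr (e := RCLike.ofReal ∘ g ∘ hA.eigenvalues)
    (fun i => by simp [Function.comp, h i])]

lemma cfc_id (hA : A.IsHermitian) : hA.cfc (fun x => x) = A := by
  unfold Matrix.IsHermitian.cfc
  exact hA.spectral_theorem.symm

lemma cfc_add (hA : A.IsHermitian) (f g : ℝ → ℝ) :
    hA.cfc (fun x => f x + g x) = hA.cfc f + hA.cfc g := by
  unfold Matrix.IsHermitian.cfc
  simp only [Unitary.conjStarAlgAut_apply]
  have h1 : diagonal (RCLike.ofReal ∘ (fun x => f x + g x) ∘ hA.eigenvalues)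
      = (diagonal (RCLike.ofReal ∘ f ∘ hA.eigenvalues) : Matrix n n ℂ)
        + diagonal (RCLike.ofReal ∘ g ∘ hA.eigenvalues) := by
    ext j k
    by_cases h : j = k
    · subst h; simp [diagonal_apply]
    · simp [diagonal_apply, h]
  rw [h1, mul_add, add_mul]

lemma cfc_const (hA : A.IsHermitian) (r : ℝ) :
    hA.cfc (fun _ => r) = ((r:ℝ) : ℂ) • (1 : Matrix n n ℂ) := by
  unfold Matrix.IsHermitian.cfc
  simp only [Unitary.conjStarAlgAut_apply]
  have h1 : diagonal (RCLike.ofReal ∘ (fun _ => r) ∘ hA.eigenvalues)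
      = ((r:ℝ):ℂ) • (1 : Matrix n n ℂ) := by
    rw [← diagonal_one, ← diagonal_smul]
    exact diagonal_congr (fun i => by simp [Function.comp])
  rw [h1, mul_smul_comm, smul_mul_assoc, mul_one, unit_mul_star hA]

/-- spectral projections -/
noncomputable def sproj (hA : A.IsHermitian) (i : n) : Matrix n n ℂ :=
  (hA.eigenvectorUnitary : Matrix n n ℂ) * diagonal (Pi.single i (1:ℂ))
    * star (hA.eigenvectorUnitary : Matrix n n ℂ)

lemma sproj_posSemidef (hA : A.IsHermitian) (i : n) : (sproj hA i).PosSemidef := by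
  unfold sproj
  rw [star_eq_conjTranspose]
  apply Matrix.PosSemidef.mul_mul_conjTranspose_same
  apply Matrix.PosSemidef.diagonal
  intro j
  by_cases h : j = i <;> simp [Pi.single_apply, h]

lemma cfc_eq_sum_sproj (hA : A.IsHermitian) (f : ℝ → ℝ) :
    hA.cfc f = ∑ i, ((f (hA.eigenvalues i) : ℝ) : ℂ) • sproj hA i := by
  unfold Matrix.IsHermitian.cfc sproj
  simp only [Unitary.conjStarAlgAut_apply]
  have h1 : diagonal (RCLike.ofReal ∘ f ∘ hA.eigenvalues)
      = ∑ i, ((f (hA.eigenvalues i):ℝ):ℂ) • diagonal (Pi.single i (1:ℂ)) := by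
    ext j k
    by_cases h : j = k
    · subst h
      simp [Matrix.sum_apply, diagonal_apply, Pi.single_apply]
    · simp [Matrix.sum_apply, diagonal_apply, h, Pi.single_apply]
  rw [h1, Finset.mul_sum, Finset.sum_mul]
  apply Finset.sum_congr rfl
  intro i _
  rw [mul_smul_comm, smul_mul_assoc]

lemma posSemidef_conj {M N : Matrix n n ℂ} (hM : M.PosSemidef) (hN : N.IsHermitian) :
    (N * M * N).PosSemidef := by
  have := hM.mul_mul_conjTranspose_same N
  rwa [hN.eq] at this

lemma posDef_conj {M N N' : Matrix n n ℂ} (hM : M.PosDef) (hN : N.IsHermitian)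
    (hNN' : N' * N = 1) : (N * M * N).PosDef := by
  refine Matrix.PosDef.of_dotProduct_mulVec_pos (mul_mul_isHermitian hN hM.1) (fun x hx => ?_)
  have hNx : N *ᵥ x ≠ 0 := by
    intro h
    apply hx
    have h2 : N' *ᵥ (N *ᵥ x) = x := by rw [mulVec_mulVec, hNN', one_mulVec]
    rw [h, mulVec_zero] at h2
    exact h2.symm
  have hgoal : star x ⬝ᵥ (N * M * N) *ᵥ x = star (N *ᵥ x) ⬝ᵥ M *ᵥ (N *ᵥ x) := by
    rw [← mulVec_mulVec, ← mulVec_mulVec, dotProduct_mulVec, star_mulVec, hN.eq,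
      ← dotProduct_mulVec]
  rw [hgoal]
  exact hM.dotProduct_mulVec_pos hNx

lemma re_qf_cfc (hA : A.IsHermitian) (f : ℝ → ℝ) (u : n → ℂ) :
    (star u ⬝ᵥ (hA.cfc f) *ᵥ u).re
      = ∑ i, f (hA.eigenvalues i)
          * Complex.normSq ((star (hA.eigenvectorUnitary : Matrix n n ℂ) *ᵥ u) i) := by
  unfold Matrix.IsHermitian.cfc
  simp only [Unitary.conjStarAlgAut_apply]
  rw [qf_conj_diag]
  rw [Complex.re_sum]
  apply Finset.sum_congr rfl
  intro i _
  simp only [Function.comp_apply]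
  simp [Complex.mul_re]

lemma posSemidef_of_re_nonneg {H : Matrix n n ℂ} (hH : H.IsHermitian)
    (h : ∀ u : n → ℂ, 0 ≤ (star u ⬝ᵥ H *ᵥ u).re) : H.PosSemidef := by
  refine Matrix.PosSemidef.of_dotProduct_mulVec_nonneg hH (fun x => ?_)
  rw [Complex.le_def]
  refine ⟨by simpa using h x, ?_⟩
  have hself : star x ⬝ᵥ H *ᵥ x = starRingEnd ℂ (star x ⬝ᵥ H *ᵥ x) := by
    rw [← RCLike.star_def]
    conv_lhs => rw [star_dotProduct]
    congr 1
    rw [star_mulVec, hH.eq, ← dotProduct_mulVec]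
  have h2 := Complex.conj_eq_iff_im.mp hself.symm
  simpa using h2.symm

end CFCLemmas


section Analysis
open MeasureTheory Set
/-- kernel integrand -/
noncomputable def ker (t x : ℝ) (l : ℝ) : ℝ := l ^ (t - 1) * (x / (x + l))

noncomputable def I0 (t : ℝ) : ℝ := ∫ l in Ioi (0:ℝ), ker t 1 l

lemma ker_contOn {t x : ℝ} (hx : 0 < x) : ContinuousOn (ker t x) (Ioi (0:ℝ)) := by
  intro l hl
  have hl' : (0:ℝ) < l := hl
  apply ContinuousAt.continuousWithinAt
  have h1 : ContinuousAt (fun l : ℝ => l ^ (t-1)) l :=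
    Real.continuousAt_rpow_const l _ (Or.inl hl'.ne')
  have h2 : ContinuousAt (fun l : ℝ => x / (x + l)) l := by
    apply ContinuousAt.div continuousAt_const (by fun_prop)
    positivity
  exact h1.mul h2

lemma ker_nonneg {t x : ℝ} (hx : 0 < x) {l : ℝ} (hl : 0 < l) : 0 ≤ ker t x l := by
  unfold ker; positivity

lemma integrableOn_ker {t : ℝ} (ht0 : 0 < t) (ht1 : t < 1) {x : ℝ} (hx : 0 < x) :
    IntegrableOn (ker t x) (Ioi (0:ℝ)) := by
  have hsplit : Ioc (0:ℝ) 1 ∪ Ioi 1 = Ioi (0:ℝ) := Ioc_union_Ioi_eq_Ioi zero_le_one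
  rw [← hsplit]
  apply IntegrableOn.union
  · -- on Ioc 0 1, dominate by l ^ (t-1)
    have hint : IntegrableOn (fun l : ℝ => l ^ (t-1)) (Ioc (0:ℝ) 1) := by
      have := intervalIntegral.intervalIntegrable_rpow' (a := 0) (b := 1) (r := t - 1) (by linarith)
      rwa [intervalIntegrable_iff_integrableOn_Ioc_of_le zero_le_one] at this
    apply Integrable.mono hint
    · exact ((ker_contOn hx).mono Ioc_subset_Ioi_self).aestronglyMeasurable measurableSet_Ioc
    · filter_upwards [ae_restrict_mem measurableSet_Ioc] with l hl
      have hl0 : (0:ℝ) < l := hl.1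
      rw [Real.norm_eq_abs, Real.norm_eq_abs, abs_of_nonneg (ker_nonneg hx hl0),
        abs_of_nonneg (Real.rpow_nonneg hl0.le _)]
      unfold ker
      have : x / (x + l) ≤ 1 := by
        rw [div_le_one (by positivity)]; linarith
      nlinarith [Real.rpow_nonneg hl0.le (t-1)]
  · -- on Ioi 1, dominate by x * l ^ (t-2)
    have hint : IntegrableOn (fun l : ℝ => x * l ^ (t-2)) (Ioi (1:ℝ)) :=
      (integrableOn_Ioi_rpow_of_lt (by linarith) one_pos).const_mul x
    apply Integrable.mono hint
    · exact ((ker_contOn hx).mono (Ioi_subset_Ioi zero_le_one)).aestronglyMeasurable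
        measurableSet_Ioi
    · filter_upwards [ae_restrict_mem measurableSet_Ioi] with l hl
      have hl1 : (1:ℝ) < l := hl
      have hl0 : (0:ℝ) < l := by linarith
      rw [Real.norm_eq_abs, Real.norm_eq_abs, abs_of_nonneg (ker_nonneg hx hl0),
        abs_of_nonneg (by positivity)]
      unfold ker
      have h1 : x / (x + l) ≤ x / l := by
        apply div_le_div_of_nonneg_left hx.le hl0; linarith
      have h2 : l ^ (t-2) = l ^ (t-1) / l := by
        rw [← Real.rpow_sub_one hl0.ne']; ring_nf
      calc l ^ (t-1) * (x / (x+l)) ≤ l ^ (t-1) * (x / l) := by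
            apply mul_le_mul_of_nonneg_left h1 (Real.rpow_nonneg hl0.le _)
        _ = x * (l ^ (t-1) / l) := by ring
        _ = x * l ^ (t-2) := by rw [h2]

lemma integral_ker {t : ℝ} (ht0 : 0 < t) (ht1 : t < 1) {x : ℝ} (hx : 0 < x) :
    ∫ l in Ioi (0:ℝ), ker t x l = x ^ t * I0 t := by
  have hsub := integral_comp_mul_left_Ioi (ker t x) 0 hx
  rw [mul_zero] at hsub
  have heq : ∀ l ∈ Ioi (0:ℝ), ker t x (x * l) = x ^ (t-1) * ker t 1 l := by
    intro l hl
    have hl0 : (0:ℝ) < l := hl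
    unfold ker
    rw [Real.mul_rpow hx.le hl0.le]
    have : x / (x + x * l) = 1 / (1 + l) := by
      rw [div_eq_div_iff (by positivity) (by positivity)]; ring
    rw [this]; ring
  rw [setIntegral_congr_fun measurableSet_Ioi heq] at hsub
  rw [MeasureTheory.integral_const_mul] at hsub
  rw [smul_eq_mul] at hsub
  have h' : x * (x ^ (t-1) * ∫ l in Ioi (0:ℝ), ker t 1 l) = ∫ l in Ioi (0:ℝ), ker t x l := by
    rw [hsub, ← mul_assoc, mul_inv_cancel₀ hx.ne', one_mul]
  have hxt : x ^ t = x * x ^ (t-1) := by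
    rw [show t = 1 + (t-1) by ring, Real.rpow_add hx, Real.rpow_one]; ring_nf
  rw [I0, hxt, ← h']
  ring

lemma I0_pos {t : ℝ} (ht0 : 0 < t) (ht1 : t < 1) : 0 < I0 t := by
  have hsub : Ioc (1:ℝ) 2 ⊆ Ioi 0 := fun l hl => lt_of_lt_of_le one_pos (le_of_lt hl.1)
  have h1 : ∫ l in Ioc (1:ℝ) 2, (1/6 : ℝ) ≤ ∫ l in Ioc (1:ℝ) 2, ker t 1 l := by
    apply setIntegral_mono_on (integrableOn_const (by simp))
      ((integrableOn_ker ht0 ht1 one_pos).mono_set hsub) measurableSet_Ioc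
    intro l hl
    have hl1 : (1:ℝ) ≤ l := hl.1.le
    have hl2 : l ≤ 2 := hl.2
    have hl0 : (0:ℝ) < l := by linarith
    unfold ker
    have h2 : l⁻¹ ≤ l ^ (t-1) := by
      calc l⁻¹ = l ^ (-1 : ℝ) := (Real.rpow_neg_one l).symm
        _ ≤ l ^ (t-1) := Real.rpow_le_rpow_of_exponent_le hl1 (by linarith)
    have h3 : (1:ℝ)/2 ≤ l⁻¹ := by
      rw [div_le_iff₀ (by norm_num), inv_mul_eq_div, le_div_iff₀ hl0]; linarith
    have h4 : (1:ℝ)/3 ≤ 1/(1+l) := by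
      rw [div_le_div_iff₀ (by norm_num) (by linarith)]; linarith
    calc (1:ℝ)/6 = (1/2) * (1/3) := by norm_num
      _ ≤ l ^ (t-1) * (1/(1+l)) :=
          mul_le_mul (le_trans h3 h2) h4 (by norm_num) (Real.rpow_nonneg hl0.le _)
  have h2 : ∫ l in Ioc (1:ℝ) 2, ker t 1 l ≤ I0 t := by
    apply setIntegral_mono_set (integrableOn_ker ht0 ht1 one_pos)
    · filter_upwards [ae_restrict_mem measurableSet_Ioi] with l hl
      exact ker_nonneg one_pos hl
    · exact HasSubset.Subset.eventuallyLE hsub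
  have h3 : ∫ l in Ioc (1:ℝ) 2, (1/6 : ℝ) = 1/6 := by
    rw [setIntegral_const, Real.volume_real_Ioc]
    norm_num
  rw [h3] at h1
  linarith


lemma sum_ker_eq {ι : Type*} [Fintype ι] (c r : ι → ℝ) {t : ℝ}
    (hc : ∀ i, 0 < c i) (ht0 : 0 < t) (ht1 : t < 1) :
    (∑ i, c i ^ t * r i) * I0 t = ∫ l in Ioi (0:ℝ), ∑ i, ker t (c i) l * r i := by
  rw [integral_finset_sum _ (fun i _ => (integrableOn_ker ht0 ht1 (hc i)).mul_const (r i)),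
    Finset.sum_mul]
  apply Finset.sum_congr rfl
  intro i _
  rw [MeasureTheory.integral_mul_const, integral_ker ht0 ht1 (hc i)]
  ring

lemma scalar_jensen {ι κ : Type*} [Fintype ι] [Fintype κ]
    (c r : ι → ℝ) (d q : κ → ℝ) (hc : ∀ i, 0 < c i) (hr : ∀ i, 0 ≤ r i)
    (hd : ∀ j, 0 < d j) (hq : ∀ j, 0 ≤ q j) {t : ℝ} (ht0 : 0 < t) (ht1 : t < 1)
    (key : ∀ l : ℝ, 0 < l → ∑ i, c i / (c i + l) * r i ≤ ∑ j, d j / (d j + l) * q j) :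
    ∑ i, c i ^ t * r i ≤ ∑ j, d j ^ t * q j := by
  have hI := I0_pos ht0 ht1
  rw [← mul_le_mul_iff_left₀ hI, sum_ker_eq c r hc ht0 ht1, sum_ker_eq d q hd ht0 ht1]
  apply setIntegral_mono_on
  · exact integrable_finset_sum _ (fun i _ => (integrableOn_ker ht0 ht1 (hc i)).mul_const (r i))
  · exact integrable_finset_sum _ (fun j _ => (integrableOn_ker ht0 ht1 (hd j)).mul_const (q j))
  · exact measurableSet_Ioi
  · intro l hl
    have hl0 : (0:ℝ) < l := hl
    have e1 : ∀ (x y : ℝ), ker t x l * y = l ^ (t-1) * (x / (x + l) * y) := by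
      intro x y; unfold ker; ring
    simp only [e1]
    rw [← Finset.mul_sum, ← Finset.mul_sum]
    exact mul_le_mul_of_nonneg_left (key l hl0) (Real.rpow_nonneg hl0.le _)


end Analysis


section MPowLemmas

variable {A B : Matrix n n ℂ}

lemma herm_smul_sum {ι : Type*} [Fintype ι] {R : ι → Matrix n n ℂ}
    (hR : ∀ i, (R i).IsHermitian) (g : ι → ℝ) :
    (∑ i, ((g i : ℝ) : ℂ) • R i).IsHermitian := by
  unfold Matrix.IsHermitian
  rw [conjTranspose_sum]
  apply Finset.sum_congr rfl
  intro i _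
  rw [conjTranspose_smul, (hR i).eq, Complex.star_def, Complex.conj_ofReal]

lemma re_qf_sum {ι : Type*} [Fintype ι] (R : ι → Matrix n n ℂ) (g : ι → ℝ) (u v : n → ℂ) :
    (star u ⬝ᵥ (∑ i, ((g i : ℝ) : ℂ) • R i) *ᵥ v).re
      = ∑ i, g i * (star u ⬝ᵥ R i *ᵥ v).re := by
  rw [mulVec_sumM, dotProduct_sumV, Complex.re_sum]
  apply Finset.sum_congr rfl
  intro i _
  rw [smul_mulVec, dotProduct_smul, smul_eq_mul, Complex.re_ofReal_mul]

lemma mpow_mul_mpow (hA : A.PosDef) (s u : ℝ) :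
    mpow hA.1 s * mpow hA.1 u = mpow hA.1 (s + u) := by
  unfold mpow
  rw [cfc_mul]
  exact cfc_congr _ (fun i => (Real.rpow_add (hA.eigenvalues_pos i) _ _).symm)

lemma mpow_zero (hA : A.IsHermitian) : mpow hA 0 = 1 := by
  unfold mpow
  rw [cfc_congr hA (g := fun _ => 1) (fun i => Real.rpow_zero _), cfc_one]

lemma mpow_one_eq (hA : A.IsHermitian) : mpow hA 1 = A := by
  unfold mpow
  rw [cfc_congr hA (g := fun x => x) (fun i => Real.rpow_one _), cfc_id]

lemma mpow_half_half (hA : A.PosDef) : mpow hA.1 (1/2) * mpow hA.1 (1/2) = A := by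
  rw [mpow_mul_mpow hA]
  norm_num
  exact mpow_one_eq hA.1

lemma mpow_half_neg_half (hA : A.PosDef) : mpow hA.1 (1/2) * mpow hA.1 (-(1/2)) = 1 := by
  rw [mpow_mul_mpow hA]
  norm_num
  exact mpow_zero hA.1

lemma mpow_neg_half_half (hA : A.PosDef) : mpow hA.1 (-(1/2)) * mpow hA.1 (1/2) = 1 := by
  rw [mpow_mul_mpow hA]
  norm_num
  exact mpow_zero hA.1

lemma wgmean_zero (hA : A.PosDef) (hB : B.PosDef) : wgmean hA hB 0 = A := by
  unfold wgmean
  rw [mpow_zero, mul_one, mpow_half_half hA]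

lemma wgmean_one (hA : A.PosDef) (hB : B.PosDef) : wgmean hA hB 1 = B := by
  unfold wgmean
  rw [mpow_one_eq]
  simp only [← mul_assoc]
  rw [mpow_half_neg_half hA, one_mul, mul_assoc, mpow_neg_half_half hA, mul_one]

end MPowLemmas

section Jensen

/-- Operator Jensen inequality for the power function, commutative weights version. -/
lemma jensen {ι : Type*} [Fintype ι] {R : ι → Matrix n n ℂ} (hR : ∀ i, (R i).PosSemidef)
    (hsum : ∑ i, R i = 1) (c : ι → ℝ) (hc : ∀ i, 0 < c i)
    {D : Matrix n n ℂ} (hD : D.PosDef) (hDeq : D = ∑ i, ((c i : ℝ) : ℂ) • R i)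
    {t : ℝ} (ht0 : 0 < t) (ht1 : t < 1) :
    (mpow hD.1 t - ∑ i, ((c i ^ t : ℝ) : ℂ) • R i).PosSemidef := by
  have hd : ∀ j, 0 < hD.1.eigenvalues j := hD.eigenvalues_pos
  apply posSemidef_of_re_nonneg
    ((mpow_isHermitian hD.1 t).sub (herm_smul_sum (fun i => (hR i).1) (fun i => c i ^ t)))
  intro u
  set d : n → ℝ := hD.1.eigenvalues with hddef
  set q : n → ℝ :=
    fun j => Complex.normSq ((star (hD.1.eigenvectorUnitary : Matrix n n ℂ) *ᵥ u) j) with hqdef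
  set r : ι → ℝ := fun i => (star u ⬝ᵥ R i *ᵥ u).re with hrdef
  have hr : ∀ i, 0 ≤ r i := by
    intro i
    have h2 := (hR i).dotProduct_mulVec_nonneg u
    exact (Complex.le_def.mp h2).1
  have hq : ∀ j, 0 ≤ q j := fun j => Complex.normSq_nonneg _
  -- the key pointwise resolvent inequality
  have key : ∀ l : ℝ, 0 < l →
      ∑ i, c i / (c i + l) * r i ≤ ∑ j, d j / (d j + l) * q j := by
    intro l hl
    set E := hD.1.cfc (fun x => (x + l)⁻¹) with hEdef
    set v := E *ᵥ u with hvdef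
    have hplus : hD.1.cfc (fun x => x + l) = D + (l : ℂ) • 1 := by
      rw [cfc_add hD.1 (fun x => x) (fun _ => l), cfc_id, cfc_const]
    have hEinv : hD.1.cfc (fun x => x + l) * E = 1 := by
      rw [hEdef, cfc_mul]
      rw [cfc_congr hD.1 (g := fun _ => 1)
        (fun j => mul_inv_cancel₀ (by have := hd j; positivity))]
      exact cfc_one hD.1
    have hDu : (D + (l : ℂ) • 1) *ᵥ v = u := by
      rw [hvdef, mulVec_mulVec, ← hplus, hEinv, one_mulVec]
    -- (s1)
    have k1 : (star u ⬝ᵥ v).re = ∑ j, (d j + l)⁻¹ * q j := by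
      rw [hvdef, hEdef]
      exact re_qf_cfc hD.1 (fun x => (x + l)⁻¹) u
    -- (s2)
    have k2 : ∑ i, r i = ∑ j, q j := by
      have e1 := re_qf_sum R (fun _ => (1:ℝ)) u u
      simp only [Complex.ofReal_one, one_smul, one_mul] at e1
      rw [hsum] at e1
      have e2 := re_qf_cfc hD.1 (fun _ => (1:ℝ)) u
      rw [cfc_one hD.1] at e2
      simp only [one_mul] at e2
      rw [hrdef, hqdef]
      rw [← e1, e2]
    -- (s4): star u ⬝ᵥ v decomposition
    have k4 : (star u ⬝ᵥ v).re = ∑ i, (star u ⬝ᵥ R i *ᵥ v).re := by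
      conv_lhs => rw [show v = (1 : Matrix n n ℂ) *ᵥ v by rw [one_mulVec], ← hsum,
        mulVec_sumM, dotProduct_sumV]
      rw [Complex.re_sum]
    -- (s5)
    have k5 : ∑ i, (c i + l) * (star v ⬝ᵥ R i *ᵥ v).re
        = (star v ⬝ᵥ (D + (l : ℂ) • 1) *ᵥ v).re := by
      have e3 : (∑ i, (((c i + l : ℝ)) : ℂ) • R i) = D + (l : ℂ) • 1 := by
        have : ∀ i, (((c i + l : ℝ)) : ℂ) • R i
            = ((c i : ℝ) : ℂ) • R i + ((l : ℝ) : ℂ) • R i := by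
          intro i
          rw [← add_smul]
          norm_cast
        rw [Finset.sum_congr rfl (fun i _ => this i), Finset.sum_add_distrib, ← hDeq,
          ← Finset.smul_sum, hsum]
      rw [← e3]
      exact (re_qf_sum R (fun i => c i + l) v v).symm
    -- (s7)
    have k7 : (star v ⬝ᵥ u).re = (star u ⬝ᵥ v).re := by
      rw [star_dotProduct]
      exact Complex.conj_re _
    -- summed Cauchy-Schwarz
    have kk : (star u ⬝ᵥ v).re ≤ ∑ i, (c i + l)⁻¹ * r i := by
      have cs : ∀ i, 2 * (star u ⬝ᵥ R i *ᵥ v).re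
          ≤ (c i + l)⁻¹ * r i + (c i + l) * (star v ⬝ᵥ R i *ᵥ v).re := by
        intro i
        exact psd_cs (hR i) u v (by have := hc i; positivity)
      have csum := Finset.sum_le_sum (fun i (_ : i ∈ Finset.univ) => cs i)
      rw [← Finset.mul_sum, ← k4, Finset.sum_add_distrib, k5, hDu, k7] at csum
      linarith
    -- final assembly
    have lhs_eq : ∑ i, c i / (c i + l) * r i = ∑ i, r i - l * ∑ i, (c i + l)⁻¹ * r i := by
      rw [Finset.mul_sum, ← Finset.sum_sub_distrib]
      apply Finset.sum_congr rfl
      intro i _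
      have hcl : c i + l ≠ 0 := by have := hc i; positivity
      field_simp
      ring
    have rhs_eq : ∑ j, d j / (d j + l) * q j = ∑ j, q j - l * ∑ j, (d j + l)⁻¹ * q j := by
      rw [Finset.mul_sum, ← Finset.sum_sub_distrib]
      apply Finset.sum_congr rfl
      intro j _
      have hdl : d j + l ≠ 0 := by have := hd j; positivity
      field_simp
      ring
    rw [lhs_eq, rhs_eq, k2, ← k1]
    have : l * (star u ⬝ᵥ v).re ≤ l * ∑ i, (c i + l)⁻¹ * r i :=
      mul_le_mul_of_nonneg_left kk hl.le
    linarith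
  have hmain : ∑ i, c i ^ t * r i ≤ ∑ j, d j ^ t * q j :=
    scalar_jensen c r d q hc hr hd hq ht0 ht1 key
  rw [sub_mulVec, dotProduct_sub, Complex.sub_re]
  have e1 : (star u ⬝ᵥ mpow hD.1 t *ᵥ u).re = ∑ j, d j ^ t * q j :=
    re_qf_cfc hD.1 (fun x => x ^ t) u
  have e2 : (star u ⬝ᵥ (∑ i, ((c i ^ t : ℝ) : ℂ) • R i) *ᵥ u).re = ∑ i, c i ^ t * r i :=
    re_qf_sum R (fun i => c i ^ t) u u
  rw [e1, e2]
  linarith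

end Jensen

/-- For a strictly positive linear map `Φ`,
`Φ(A #ₜ B) ⪯ Φ(A) #ₜ Φ(B)` for all `t ∈ [0,1]`. -/
theorem positive_map_wgmean {k : Type*} [Fintype k] [DecidableEq k]
    (Φ : Matrix n n ℂ →ₗ[ℂ] Matrix k k ℂ)
    (hpos : ∀ M : Matrix n n ℂ, M.PosSemidef → (Φ M).PosSemidef)
    (hspos : ∀ M : Matrix n n ℂ, M.PosDef → (Φ M).PosDef)
    {A B : Matrix n n ℂ} (hA : A.PosDef) (hB : B.PosDef)
    {t : ℝ} (ht : t ∈ Set.Icc (0 : ℝ) 1) :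
    LoewnerLE (Φ (wgmean hA hB t)) (wgmean (hspos A hA) (hspos B hB) t) := by
  obtain ⟨ht0, ht1⟩ := ht
  rcases eq_or_lt_of_le ht0 with h0 | ht0'
  · rw [← h0, wgmean_zero hA hB, wgmean_zero (hspos A hA) (hspos B hB)]
    unfold LoewnerLE
    rw [sub_self]
    exact Matrix.PosSemidef.zero
  rcases eq_or_lt_of_le ht1 with h1 | ht1'
  · rw [h1, wgmean_one hA hB, wgmean_one (hspos A hA) (hspos B hB)]
    unfold LoewnerLE
    rw [sub_self]
    exact Matrix.PosSemidef.zero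
  -- main case 0 < t < 1
  set Aph := mpow hA.1 (1/2) with hAphdef
  set Am := mpow hA.1 (-(1/2)) with hAmdef
  have hAphh : Aph.IsHermitian := mpow_isHermitian _ _
  have hAmh : Am.IsHermitian := mpow_isHermitian _ _
  have h11 : Aph * Am = 1 := mpow_half_neg_half hA
  have h12 : Am * Aph = 1 := mpow_neg_half_half hA
  have h13 : Aph * Aph = A := mpow_half_half hA
  set C := Am * B * Am with hCdef
  have hCh : C.IsHermitian := mul_mul_isHermitian hAmh hB.1
  have hCpd : C.PosDef := posDef_conj hB hAmh h11
  set c : n → ℝ := hCh.eigenvalues with hcdef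
  have hc : ∀ i, 0 < c i := hCpd.eigenvalues_pos
  set S : n → Matrix n n ℂ := fun i => Aph * sproj hCh i * Aph with hSdef
  have hSpsd : ∀ i, (S i).PosSemidef :=
    fun i => posSemidef_conj (sproj_posSemidef hCh i) hAphh
  have key : ∀ f : ℝ → ℝ, Aph * hCh.cfc f * Aph = ∑ i, ((f (c i) : ℝ) : ℂ) • S i := by
    intro f
    rw [cfc_eq_sum_sproj hCh f, Finset.mul_sum, Finset.sum_mul]
    apply Finset.sum_congr rfl
    intro i _
    rw [mul_smul_comm, smul_mul_assoc]
  have hAeq : A = ∑ i, S i := by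
    have h := key (fun _ => 1)
    rw [cfc_one hCh, mul_one, h13] at h
    simpa using h
  have hBeq : B = ∑ i, ((c i : ℝ) : ℂ) • S i := by
    have h := key (fun x => x)
    rw [cfc_id hCh] at h
    rw [← h, hCdef]
    simp only [← mul_assoc]
    rw [h11, one_mul, mul_assoc, h12, mul_one]
  have hWeq : wgmean hA hB t = ∑ i, ((c i ^ t : ℝ) : ℂ) • S i := by
    have h := key (fun x => x ^ t)
    rw [← h]
    rfl
  set Q : n → Matrix k k ℂ := fun i => Φ (S i) with hQdef
  have hQpsd : ∀ i, (Q i).PosSemidef := fun i => hpos _ (hSpsd i)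
  have hΦA : Φ A = ∑ i, Q i := by rw [hAeq, map_sum]
  have hΦB : Φ B = ∑ i, ((c i : ℝ) : ℂ) • Q i := by
    rw [hBeq, map_sum]
    exact Finset.sum_congr rfl (fun i _ => map_smul Φ _ _)
  have hΦW : Φ (wgmean hA hB t) = ∑ i, ((c i ^ t : ℝ) : ℂ) • Q i := by
    rw [hWeq, map_sum]
    exact Finset.sum_congr rfl (fun i _ => map_smul Φ _ _)
  -- the image side
  set hXpd := hspos A hA with hXpddef
  set Xph := mpow hXpd.1 (1/2) with hXphdef
  set Xm := mpow hXpd.1 (-(1/2)) with hXmdef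
  have hXphh : Xph.IsHermitian := mpow_isHermitian _ _
  have hXmh : Xm.IsHermitian := mpow_isHermitian _ _
  have g11 : Xph * Xm = 1 := mpow_half_neg_half hXpd
  have g12 : Xm * Xph = 1 := mpow_neg_half_half hXpd
  have g13 : Xph * Xph = Φ A := mpow_half_half hXpd
  set R : n → Matrix k k ℂ := fun i => Xm * Q i * Xm with hRdef
  have hRpsd : ∀ i, (R i).PosSemidef := fun i => posSemidef_conj (hQpsd i) hXmh
  have hRsum : ∑ i, R i = 1 := by
    have h : ∑ i, R i = Xm * (∑ i, Q i) * Xm := by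
      rw [Finset.mul_sum, Finset.sum_mul]
    rw [h, ← hΦA, ← g13]
    simp only [← mul_assoc]
    rw [g12, one_mul, g11]
  set D := Xm * Φ B * Xm with hDdef
  have hDpd : D.PosDef := posDef_conj (hspos B hB) hXmh g11
  have hDeq : D = ∑ i, ((c i : ℝ) : ℂ) • R i := by
    rw [hDdef, hΦB, Finset.mul_sum, Finset.sum_mul]
    apply Finset.sum_congr rfl
    intro i _
    rw [mul_smul_comm, smul_mul_assoc]
  have core := jensen hRpsd hRsum c hc hDpd hDeq ht0' ht1'
  have hRHS : wgmean (hspos A hA) (hspos B hB) t = Xph * mpow hDpd.1 t * Xph := rfl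
  have hQR : ∀ i, Xph * R i * Xph = Q i := by
    intro i
    rw [hRdef]
    simp only [← mul_assoc]
    rw [g11, one_mul, mul_assoc, g12, mul_one]
  have hLHS : Φ (wgmean hA hB t) = Xph * (∑ i, ((c i ^ t : ℝ) : ℂ) • R i) * Xph := by
    rw [hΦW, Finset.mul_sum, Finset.sum_mul]
    apply Finset.sum_congr rfl
    intro i _
    rw [mul_smul_comm, smul_mul_assoc, hQR i]
  unfold LoewnerLE
  rw [hRHS, hLHS]
  have hdiff : Xph * mpow hDpd.1 t * Xph - Xph * (∑ i, ((c i ^ t : ℝ) : ℂ) • R i) * Xph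
      = Xph * (mpow hDpd.1 t - ∑ i, ((c i ^ t : ℝ) : ℂ) • R i) * Xph := by
    rw [mul_sub, sub_mul]
  rw [hdiff]
  exact posSemidef_conj core hXphh

end CGO
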